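/- Let X be an n.n.constraint space, M a Markov cocycle and V a nearest neighbour interaction on X. Suppose (x,y) ∈ Δ_X and there is a finite chain x = x₁, x₂, …, x_n = y in X such that each (x_i, x_{i+1}) ∈ Δ_X and each (x_i, x_{i+1}) is Markov-similar to some V-good pair. Then (x,y) is V-good. -/
import Mathlib


open scoped Classical

namespace HC

variable {V : Type*} {A : Type*}

/-- The external vertex boundary of a set of vertices. -/
def boundary (G : SimpleGraph V) (F : Set V) : Set V :=
  {u | u ∉ F ∧ ∃ v ∈ F, G.Adj u v}

/-- The language of `X` on `F`: the set of patterns on `F` appearing in `X`. -/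
def lang (X : Set (V → A)) (F : Set V) : Set (F → A) :=
  F.restrict '' X

/-- The `n`-ball around `v` in the graph metric. -/
def ballSet (G : SimpleGraph V) (v : V) (n : ℕ) : Set V :=
  {u | ∃ p : G.Walk v u, p.length ≤ n}

/-- Asymptotic pairs: pairs of configurations in `X` differing at finitely many sites. -/
def Delta (X : Set (V → A)) : Set ((V → A) × (V → A)) :=
  {p | p.1 ∈ X ∧ p.2 ∈ X ∧ {v | p.1 v ≠ p.2 v}.Finite}

/-- Topological Markov field. -/
def IsTMF [TopologicalSpace A] (G : SimpleGraph V) (X : Set (V → A)) : Prop :=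
  IsClosed X ∧
    ∀ x ∈ X, ∀ y ∈ X, ∀ F : Set V, F.Finite →
      (∀ u ∈ boundary G F, x u = y u) →
      (fun v => if v ∈ F then x v else y v) ∈ X

/-- Nearest neighbour constraint space: the set of configurations avoiding a
set of forbidden patterns on finite cliques. -/
def IsNNConstraint (G : SimpleGraph V) (X : Set (V → A)) : Prop :=
  ∃ 𝓕 : ∀ F : Set V, Set (F → A),
    X = {x : V → A | ∀ F : Set V, F.Finite → G.IsClique F → F.restrict x ∉ 𝓕 F}

/-- `s` is a safe symbol for `X`. -/
def IsSafeSymbol (X : Set (V → A)) (s : A) : Prop :=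
  ∀ x ∈ X, ∀ S : Set V, (fun v => if v ∈ S then x v else s) ∈ X

/-- The pattern `(c at v, d at w)` belongs to the language of `X`. -/
def edgeB (X : Set (V → A)) (v w : V) (c d : A) : Prop :=
  ∃ x ∈ X, x v = c ∧ x w = d

/-- The single-site pattern `c at v` belongs to the language of `X`. -/
def siteB (X : Set (V → A)) (v : V) (c : A) : Prop :=
  ∃ x ∈ X, x v = c

/-- The pairs `(x,y)` and `(z,w)` are Markov-similar. -/
def MarkovSimilar (G : SimpleGraph V) (x y z w : V → A) : Prop :=
  ∃ S : Set V, S.Finite ∧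
    (∀ u, u ∉ S → x u = y u ∧ z u = w u) ∧
    (∀ u, u ∈ S ∪ boundary G S → x u = z u ∧ y u = w u)

/-- A Markov cocycle on `X` (realised as a real function on pairs of
configurations, vanishing off the asymptotic relation `Δ_X`). -/
def IsMarkovCocycle (G : SimpleGraph V) (X : Set (V → A))
    (M : (V → A) → (V → A) → ℝ) : Prop :=
  (∀ x y : V → A, (x, y) ∉ Delta X → M x y = 0) ∧
  (∀ x y z : V → A, (x, y) ∈ Delta X → (y, z) ∈ Delta X → M x z = M x y + M y z) ∧
  (∀ x y z w : V → A, (x, y) ∈ Delta X → (z, w) ∈ Delta X →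
    MarkovSimilar G x y z w → M x y = M z w)

/-- A nearest neighbour interaction: a real weight for each pattern,
vanishing on patterns whose domain is not a finite clique. -/
def IsNNInteraction (G : SimpleGraph V) (U : ∀ F : Set V, (F → A) → ℝ) : Prop :=
  ∀ F : Set V, ¬(F.Finite ∧ G.IsClique F) → ∀ p : F → A, U F p = 0

/-- `Σ_{F ⊆ V finite} (U(y|_F) - U(x|_F))`. -/
noncomputable def gibbsSum (U : ∀ F : Set V, (F → A) → ℝ) (x y : V → A) : ℝ :=
  ∑ᶠ F : Set V, (U F (F.restrict y) - U F (F.restrict x))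

/-- A Gibbs cocycle with some nearest neighbour interaction. -/
def IsGibbsCocycle (G : SimpleGraph V) (X : Set (V → A))
    (M : (V → A) → (V → A) → ℝ) : Prop :=
  (∀ x y : V → A, (x, y) ∉ Delta X → M x y = 0) ∧
  ∃ U : ∀ F : Set V, (F → A) → ℝ, IsNNInteraction G U ∧
    ∀ x y : V → A, (x, y) ∈ Delta X → M x y = gibbsSum U x y

/-- The space `𝐌_X` of Markov cocycles on `X`. -/
def markovSet (G : SimpleGraph V) (X : Set (V → A)) :
    Set ((V → A) → (V → A) → ℝ) :=
  {M | IsMarkovCocycle G X M}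

/-- The space `𝐆_X` of Gibbs cocycles with nearest neighbour interactions on `X`. -/
def gibbsSet (G : SimpleGraph V) (X : Set (V → A)) :
    Set ((V → A) → (V → A) → ℝ) :=
  {M | IsGibbsCocycle G X M}

/-- `X` is Hammersley-Clifford: `𝐌_X = 𝐆_X`. -/
def IsHammersleyClifford (G : SimpleGraph V) (X : Set (V → A)) : Prop :=
  markovSet G X = gibbsSet G X

/-- The action of a permutation of the vertices on configurations. -/
def confAct (g : Equiv.Perm V) (x : V → A) : V → A :=
  fun v => x (g⁻¹ v)

/-- `S` consists of automorphisms of the graph `G`. -/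
def PreservesAdj (G : SimpleGraph V) (S : Subgroup (Equiv.Perm V)) : Prop :=
  ∀ g ∈ S, ∀ u v : V, G.Adj (g u) (g v) ↔ G.Adj u v

/-- `X` is invariant under the subgroup `S`. -/
def InvariantSpace (S : Subgroup (Equiv.Perm V)) (X : Set (V → A)) : Prop :=
  ∀ g ∈ S, confAct g '' X = X

/-- The cocycle `M` is `S`-invariant. -/
def InvariantCocycle (S : Subgroup (Equiv.Perm V)) (M : (V → A) → (V → A) → ℝ) : Prop :=
  ∀ g ∈ S, ∀ x y : V → A, M (confAct g x) (confAct g y) = M x y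

/-- The interaction `U` is `S`-invariant: `U(ga) = U(a)` for every pattern `a`. -/
def InvariantInteraction (S : Subgroup (Equiv.Perm V))
    (U : ∀ F : Set V, (F → A) → ℝ) : Prop :=
  ∀ g ∈ S, ∀ F : Set V, ∀ x : V → A,
    U (⇑g '' F) ((⇑g '' F).restrict (confAct g x)) = U F (F.restrict x)

/-- The space `𝐌^G_X` of `S`-invariant Markov cocycles on `X`. -/
def markovSetInv (G : SimpleGraph V) (S : Subgroup (Equiv.Perm V)) (X : Set (V → A)) :
    Set ((V → A) → (V → A) → ℝ) :=
  {M | IsMarkovCocycle G X M ∧ InvariantCocycle S M}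

/-- The space `𝐆^G_X` of Gibbs cocycles with `S`-invariant nearest neighbour
interactions on `X`. -/
def gibbsSetInv (G : SimpleGraph V) (S : Subgroup (Equiv.Perm V)) (X : Set (V → A)) :
    Set ((V → A) → (V → A) → ℝ) :=
  {M | (∀ x y : V → A, (x, y) ∉ Delta X → M x y = 0) ∧
    ∃ U : ∀ F : Set V, (F → A) → ℝ, IsNNInteraction G U ∧ InvariantInteraction S U ∧
      ∀ x y : V → A, (x, y) ∈ Delta X → M x y = gibbsSum U x y}

/-- `X` is `G`-Hammersley-Clifford: `𝐌^G_X = 𝐆^G_X`. -/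
def IsGHammersleyClifford (G : SimpleGraph V) (S : Subgroup (Equiv.Perm V))
    (X : Set (V → A)) : Prop :=
  markovSetInv G S X = gibbsSetInv G S X

/-- The symbol `a` can be folded into the symbol `b` in `X`. -/
def FoldsInto (G : SimpleGraph V) (X : Set (V → A)) (a b : A) : Prop :=
  a ≠ b ∧
    ∀ v₁ v₂ v₃ : V, G.Adj v₁ v₂ → G.Adj v₂ v₃ → ∀ c : A,
      edgeB X v₁ v₂ a c →
        edgeB X v₁ v₂ b c ∧ edgeB X v₂ v₃ c b ∧
          ∃ x ∈ X, ∀ u ∈ boundary G (ballSet G v₁ 1), x u = b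

/-- `X ∩ (𝒜∖{a})^𝒱`. -/
def foldSpace (X : Set (V → A)) (a : A) : Set (V → A) :=
  X ∩ {x | ∀ v, x v ≠ a}

/-- `Y` is a fold of `X` (and `X` an unfold of `Y`). -/
def IsFoldOf (G : SimpleGraph V) (Y X : Set (V → A)) : Prop :=
  ∃ a b : A, FoldsInto G X a b ∧ Y = foldSpace X a

/-- `P₁, P₂` are the partite classes of a bipartition of `G`. -/
def IsBipartition (G : SimpleGraph V) (P₁ P₂ : Set V) : Prop :=
  (∀ v : V, v ∈ P₁ ∨ v ∈ P₂) ∧ Disjoint P₁ P₂ ∧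
    ∀ u v : V, G.Adj u v → (u ∈ P₁ ∧ v ∈ P₂) ∨ (u ∈ P₂ ∧ v ∈ P₁)

/-- `G` is bipartite. -/
def Bipartite (G : SimpleGraph V) : Prop :=
  ∃ P₁ P₂ : Set V, IsBipartition G P₁ P₂

/-- `θ^v_c(x)`: change the value of `x` at `v` to `c`. -/
noncomputable def theta (x : V → A) (v : V) (c : A) : V → A :=
  fun u => if u = v then c else x u

/-- `θ^{w₁,…,w_r}_{c₁,…,c_r}(x)`: change the value of `x` at each `w i` to `c i`. -/
noncomputable def multiUpdate (x : V → A) {r : ℕ} (w : Fin r → V) (c : Fin r → A) :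
    V → A :=
  fun u => if h : ∃ i, w i = u then c h.choose else x u

/-- Restriction of a cocycle to the asymptotic pairs of a subspace `Y`. -/
noncomputable def restrictCocycle (Y : Set (V → A)) (M : (V → A) → (V → A) → ℝ) :
    (V → A) → (V → A) → ℝ :=
  fun x y => if (x, y) ∈ Delta Y then M x y else 0

/-- The pair `(x,y)` is `U`-good for the cocycle `M`. -/
def VGood (M : (V → A) → (V → A) → ℝ) (U : ∀ F : Set V, (F → A) → ℝ)
    (x y : V → A) : Prop :=
  M x y = gibbsSum U x y

/-- `𝒱₁`: vertices `v` admitting a neighbour `w` with `(a,a) ∈ ℬ_{v,w}(X)`. -/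
def Vone (G : SimpleGraph V) (X : Set (V → A)) (a : A) : Set V :=
  {v | ∃ w, G.Adj v w ∧ edgeB X v w a a}

/-- `𝒱₂`: vertices not in `𝒱₁` where the symbol `a` can appear. -/
def Vtwo (G : SimpleGraph V) (X : Set (V → A)) (a : A) : Set V :=
  {v | v ∉ Vone G X a ∧ siteB X v a}

/-- The space of graph homomorphisms from `G` to `H`, as a configuration space. -/
def homSpace {B : Type*} (G : SimpleGraph V) (H : SimpleGraph B) : Set (V → B) :=
  {x | ∀ v w : V, G.Adj v w → H.Adj (x v) (x w)}

private lemma restrict_eq_of_forall {F : Set V} {x y : V → A}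
    (h : ∀ u ∈ F, x u = y u) : F.restrict x = F.restrict y := by
  funext u; exact h u u.2

private lemma gibbs_support_finite (G : SimpleGraph V)
    (hlf : ∀ v : V, (G.neighborSet v).Finite)
    (U : ∀ F : Set V, (F → A) → ℝ) (hU : IsNNInteraction G U)
    {x y : V → A} (hd : {v | x v ≠ y v}.Finite) :
    (Function.support fun F : Set V =>
      U F (F.restrict y) - U F (F.restrict x)).Finite := by
  apply Set.Finite.subset (Set.Finite.biUnion hd
    (fun v _ => Set.Finite.finite_subsets ((hlf v).insert v)))
  intro F hF
  simp only [Function.mem_support] at hF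
  by_cases hc : F.Finite ∧ G.IsClique F
  · have hne : F.restrict x ≠ F.restrict y := by
      intro h
      apply hF
      rw [show F.restrict y = F.restrict x from h.symm]
      ring
    obtain ⟨⟨v, hvF⟩, hv⟩ : ∃ u : F, x u ≠ y u := by
      by_contra h
      push_neg at h
      exact hne (funext fun u => h u)
    refine Set.mem_biUnion (show v ∈ {v | x v ≠ y v} from hv) ?_
    intro u huF
    rcases eq_or_ne u v with huv | huv
    · exact Set.mem_insert_iff.mpr (Or.inl huv)
    · exact Set.mem_insert_iff.mpr (Or.inr ((hc.2 huF hvF huv).symm))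
  · exfalso
    apply hF
    rw [hU F hc, hU F hc]
    ring

private lemma gibbsSum_self (U : ∀ F : Set V, (F → A) → ℝ) (x : V → A) :
    gibbsSum U x x = 0 := by
  simp [gibbsSum]

private lemma gibbsSum_trans (G : SimpleGraph V)
    (hlf : ∀ v : V, (G.neighborSet v).Finite)
    (U : ∀ F : Set V, (F → A) → ℝ) (hU : IsNNInteraction G U)
    {x y z : V → A} (hxy : {v | x v ≠ y v}.Finite) (hyz : {v | y v ≠ z v}.Finite) :
    gibbsSum U x z = gibbsSum U x y + gibbsSum U y z := by
  unfold gibbsSum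
  rw [← finsum_add_distrib (gibbs_support_finite G hlf U hU hxy)
        (gibbs_support_finite G hlf U hU hyz)]
  exact finsum_congr fun F => by ring

private lemma gibbsSum_similar (G : SimpleGraph V)
    (U : ∀ F : Set V, (F → A) → ℝ) (hU : IsNNInteraction G U)
    {x y z w : V → A} (h : MarkovSimilar G x y z w) :
    gibbsSum U x y = gibbsSum U z w := by
  obtain ⟨S, hSfin, h1, h2⟩ := h
  apply finsum_congr
  intro F
  by_cases hc : F.Finite ∧ G.IsClique F
  · by_cases hFS : (F ∩ S).Nonempty
    · obtain ⟨v, hvF, hvS⟩ := hFS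
      have key : ∀ u ∈ F, u ∈ S ∪ boundary G S := by
        intro u huF
        by_cases huS : u ∈ S
        · exact Or.inl huS
        · refine Or.inr ⟨huS, v, hvS, ?_⟩
          have huv : u ≠ v := fun h => huS (h ▸ hvS)
          exact hc.2 huF hvF huv
      have hx : F.restrict x = F.restrict z :=
        restrict_eq_of_forall (fun u hu => (h2 u (key u hu)).1)
      have hy : F.restrict y = F.restrict w :=
        restrict_eq_of_forall (fun u hu => (h2 u (key u hu)).2)
      rw [hx, hy]
    · have hxy : F.restrict x = F.restrict y :=
        restrict_eq_of_forall (fun u hu => (h1 u (fun hu' => hFS ⟨u, hu, hu'⟩)).1)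
      have hzw : F.restrict z = F.restrict w :=
        restrict_eq_of_forall (fun u hu => (h1 u (fun hu' => hFS ⟨u, hu, hu'⟩)).2)
      rw [hxy, hzw]
      ring
  · rw [hU F hc, hU F hc, hU F hc, hU F hc]

/-- If an asymptotic pair `(x,y)` is connected by a finite chain each
of whose steps is Markov-similar to a `V`-good pair, then `(x,y)` is `V`-good. -/
theorem statement7 [Countable V] [Fintype A]
    (G : SimpleGraph V) (hlf : ∀ v : V, (G.neighborSet v).Finite)
    (X : Set (V → A)) (hX : IsNNConstraint G X)
    (M : (V → A) → (V → A) → ℝ) (hM : IsMarkovCocycle G X M)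
    (U : ∀ F : Set V, (F → A) → ℝ) (hU : IsNNInteraction G U)
    (x y : V → A) (hxy : (x, y) ∈ Delta X)
    (n : ℕ) (ch : Fin (n + 1) → V → A) (h0 : ch 0 = x) (hn : ch (Fin.last n) = y)
    (hstep : ∀ i : Fin n, (ch i.castSucc, ch i.succ) ∈ Delta X ∧
      ∃ z w : V → A, (z, w) ∈ Delta X ∧
        MarkovSimilar G (ch i.castSucc) (ch i.succ) z w ∧ VGood M U z w) :
    VGood M U x y := by
  obtain ⟨hMzero, hMadd, hMsim⟩ := hM
  have key : ∀ k : ℕ, ∀ hk : k ≤ n,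
      (x, ch ⟨k, Nat.lt_succ_of_le hk⟩) ∈ Delta X ∧
        M x (ch ⟨k, Nat.lt_succ_of_le hk⟩) = gibbsSum U x (ch ⟨k, Nat.lt_succ_of_le hk⟩) := by
    intro k
    induction k with
    | zero =>
      intro hk
      have h00 : ch ⟨0, Nat.lt_succ_of_le hk⟩ = x := h0
      rw [h00]
      have hDel : (x, x) ∈ Delta X := ⟨hxy.1, hxy.1, by simp⟩
      refine ⟨hDel, ?_⟩
      have := hMadd x x x hDel hDel
      rw [gibbsSum_self]
      linarith
    | succ k ih =>
      intro hk
      have hkn : k < n := hk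
      obtain ⟨hDel, hGood⟩ := ih (le_of_lt hkn)
      set i : Fin n := ⟨k, hkn⟩ with hi
      have hcast : i.castSucc = (⟨k, Nat.lt_succ_of_le (le_of_lt hkn)⟩ : Fin (n + 1)) := rfl
      have hsuc : i.succ = (⟨k + 1, Nat.lt_succ_of_le hk⟩ : Fin (n + 1)) := rfl
      obtain ⟨hstepDel, z, w, hzw, hsim, hgood⟩ := hstep i
      have hstepGood : M (ch i.castSucc) (ch i.succ) = gibbsSum U (ch i.castSucc) (ch i.succ) := by
        rw [hMsim _ _ z w hstepDel hzw hsim, hgood, ← gibbsSum_similar G U hU hsim]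
      rw [hcast, hsuc] at hstepDel hstepGood
      set a := ch (⟨k, Nat.lt_succ_of_le (le_of_lt hkn)⟩ : Fin (n + 1))
      set b := ch (⟨k + 1, Nat.lt_succ_of_le hk⟩ : Fin (n + 1))
      have hdiff : {v | x v ≠ b v}.Finite := by
        apply (hDel.2.2.union hstepDel.2.2).subset
        intro v hv
        by_contra hv'
        simp only [Set.mem_union, Set.mem_setOf_eq, not_or, not_not] at hv'
        exact hv (hv'.1.trans hv'.2)
      have hDel' : (x, b) ∈ Delta X := ⟨hxy.1, hstepDel.2.1, hdiff⟩
      refine ⟨hDel', ?_⟩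
      rw [hMadd x a b hDel hstepDel,
        gibbsSum_trans G hlf U hU hDel.2.2 hstepDel.2.2, hGood, hstepGood]
  have h := (key n le_rfl).2
  have hlast : ch ⟨n, Nat.lt_succ_of_le le_rfl⟩ = y := hn
  rw [hlast] at h
  exact h
end HC
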